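/- Let S1 be a nonempty finite multiset of reals and S2 a nonempty finite multiset of reals with elements s_1 ≥ s_2 ≥ ... ≥ s_k in descending order. For every sub-multiset T ⊆ S2, the mean of S1 ∪ T is at most max_{0 ≤ i ≤ k} ( (Σ_{s∈S1} s + Σ_{j≤i} s_j) / (|S1| + i) ). -/

import Mathlib

lemma take_cons_sum_le (a : ℝ) (l : List ℝ) (ha : ∀ x ∈ l, x ≤ a) (n : ℕ)
    (hn : n ≤ l.length) : (l.take n).sum ≤ ((a :: l).take n).sum := by
  cases n with
  | zero => simp
  | succ m =>
      have hm : m < l.length := hn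
      have hsum : (l.take (m + 1)).sum = (l.take m).sum + l.get ⟨m, hm⟩ :=
        List.sum_take_succ l m hm
      have : l.get ⟨m, hm⟩ ≤ a := ha _ (List.get_mem l ⟨m, hm⟩)
      simp only [List.take_succ_cons, List.sum_cons]
      rw [hsum]
      linarith

lemma sub_sum_le_take_sum : ∀ (l : List ℝ), List.Pairwise (· ≥ ·) l →
    ∀ T : Multiset ℝ, T ≤ (l : Multiset ℝ) →
    T.sum ≤ (l.take (Multiset.card T)).sum := by
  intro l
  induction l with
  | nil =>
      intro _ T hT
      simp only [List.nil_eq, Multiset.coe_nil] at hT ⊢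
      have : T = 0 := Multiset.le_zero.mp hT
      simp [this]
  | cons a l ih =>
      intro hl T hT
      have hl' : List.Pairwise (· ≥ ·) l := hl.of_cons
      have ha : ∀ x ∈ l, x ≤ a := fun x hx => List.rel_of_pairwise_cons hl hx
      by_cases hmem : a ∈ T
      · have hTe : T.erase a ≤ (l : Multiset ℝ) := by
          have := Multiset.erase_le_erase a hT
          simpa using this
        have hcard : Multiset.card T = Multiset.card (T.erase a) + 1 := by
          have hpos : 0 < Multiset.card T := Multiset.card_pos_iff_exists_mem.mpr ⟨a, hmem⟩
          rw [Multiset.card_erase_of_mem hmem]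
          exact (Nat.succ_pred_eq_of_pos hpos).symm
        have hsumT : T.sum = a + (T.erase a).sum := by
          conv_lhs => rw [← Multiset.cons_erase hmem]
          simp
        have := ih hl' (T.erase a) hTe
        rw [hsumT, hcard]
        simp only [List.take_succ_cons, List.sum_cons]
        linarith
      · have hTle : T ≤ (l : Multiset ℝ) := by
          rw [Multiset.le_iff_count]
          intro x
          have h1 := Multiset.le_iff_count.mp hT x
          by_cases hx : x = a
          · subst hx
            simp [Multiset.count_eq_zero_of_notMem hmem]
          · simpa [Multiset.count_cons, List.count_cons, hx, Ne.symm hx] using h1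
        have hcard : Multiset.card T ≤ l.length := by
          have := Multiset.card_le_card hTle
          simpa using this
        calc T.sum ≤ (l.take (Multiset.card T)).sum := ih hl' T hTle
          _ ≤ ((a :: l).take (Multiset.card T)).sum :=
              take_cons_sum_le a l ha _ hcard

/-- for `S1` nonempty and `S2` given as a descending list `l`
(`s_1 ≥ s_2 ≥ ... ≥ s_k`), for every sub-multiset `T` of `S2`, the mean of
`S1 ∪ T` is at most the maximum over `0 ≤ i ≤ k` of
`(Σ S1 + Σ_{j ≤ i} s_j)/(|S1| + i)` (prefixes of the descending order). -/
theorem stmt9 (S1 T : Multiset ℝ) (l : List ℝ) (hl : List.Pairwise (· ≥ ·) l)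
    (hS1 : S1 ≠ 0) (hT : T ≤ (l : Multiset ℝ)) :
    ∃ i ≤ l.length,
      (S1 + T).sum / ((Multiset.card (S1 + T) : ℕ) : ℝ) ≤
        (S1.sum + (l.take i).sum) / (((Multiset.card S1 : ℕ) : ℝ) + (i : ℝ)) := by
  refine ⟨Multiset.card T, by simpa using Multiset.card_le_card hT, ?_⟩
  have hsum : T.sum ≤ (l.take (Multiset.card T)).sum := sub_sum_le_take_sum l hl T hT
  have hpos : (0 : ℝ) < (Multiset.card S1 : ℝ) + (Multiset.card T : ℝ) := by
    have : 0 < Multiset.card S1 := Multiset.card_pos.mpr hS1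
    positivity
  rw [Multiset.card_add, Multiset.sum_add]
  push_cast
  gcongr
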